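/- Let (Y₀, Y₁) be a compatible couple of Banach spaces which is a uniform Calderón couple and is Gagliardo complete (so that K-divisibility holds with universal constant γ), and let X be any Banach space. Then the pair (X ⊕₁ Y₀, X ⊕₁ Y₁) is a Calderón couple: if K(t, (x₀,y₀); X⊕Y₀, X⊕Y₁) ≤ K(t, (x₁,y₁); X⊕Y₀, X⊕Y₁) for all t > 0, then there exists a linear operator S bounded on both X ⊕₁ Y₀ and X ⊕₁ Y₁ with S(x₁,y₁) = (x₀,y₀). -/

import Mathlib

open scoped ENNReal NNReal

/-- A (possibly infinite-valued) norm of a member of a compatible couple, defined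
on a common ambient vector space `V`; the space itself is `{v | N v < ∞}`. -/
structure CoupleNorm (V : Type*) [AddCommGroup V] [Module ℝ V] where
  N : V → ℝ≥0∞
  add_le : ∀ x y, N (x + y) ≤ N x + N y
  smul : ∀ (c : ℝ) (x), N (c • x) = (‖c‖₊ : ℝ≥0∞) * N x
  eq_zero : ∀ x, N x = 0 ↔ x = 0

/-- The Peetre K-functional of the couple `(N₀, N₁)`. -/
noncomputable def Kfun {V : Type*} [AddCommGroup V] [Module ℝ V]
    (N₀ N₁ : V → ℝ≥0∞) (t : ℝ) (v : V) : ℝ≥0∞ :=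
  ⨅ u : V, N₀ u + ENNReal.ofReal t * N₁ (v - u)

/-- Concavity for an `ℝ≥0∞`-valued function on `(0,∞)`. -/
def EConcaveOn (φ : ℝ → ℝ≥0∞) : Prop :=
  ∀ s t : ℝ, 0 < s → 0 < t → ∀ a b : ℝ≥0, a + b = 1 →
    (a : ℝ≥0∞) * φ s + (b : ℝ≥0∞) * φ t ≤ φ ((a : ℝ) * s + (b : ℝ) * t)

/-- `(N₀, N₁)` is a uniform Calderón couple. -/
def UniformCalderon {V : Type*} [AddCommGroup V] [Module ℝ V]
    (N₀ N₁ : V → ℝ≥0∞) : Prop :=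
  ∃ C : ℝ≥0, ∀ f g : V, (∀ t > (0 : ℝ), Kfun N₀ N₁ t g ≤ Kfun N₀ N₁ t f) →
    ∃ T : V →ₗ[ℝ] V, T f = g ∧
      ∀ v, N₀ (T v) ≤ (C : ℝ≥0∞) * N₀ v ∧ N₁ (T v) ≤ (C : ℝ≥0∞) * N₁ v

/-- K-divisibility with constant `γ`. -/
def KDivisible {V : Type*} [AddCommGroup V] [Module ℝ V]
    (N₀ N₁ : V → ℝ≥0∞) (γ : ℝ≥0) : Prop :=
  ∀ (y : V) (φ₁ φ₂ : ℝ → ℝ≥0∞), EConcaveOn φ₁ → EConcaveOn φ₂ →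
    (∀ t > (0 : ℝ), Kfun N₀ N₁ t y ≤ φ₁ t + φ₂ t) →
    ∃ u v : V, y = u + v ∧ (∀ t > (0 : ℝ), Kfun N₀ N₁ t u ≤ (γ : ℝ≥0∞) * φ₁ t) ∧
      ∀ t > (0 : ℝ), Kfun N₀ N₁ t v ≤ (γ : ℝ≥0∞) * φ₂ t

/-- The ℓ₁-direct-sum norm of `X ⊕₁ Y`. -/
noncomputable def prodN (X : Type*) [NormedAddCommGroup X] {V : Type*}
    [AddCommGroup V] [Module ℝ V] (N : V → ℝ≥0∞) : X × V → ℝ≥0∞ :=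
  fun p => (‖p.1‖₊ : ℝ≥0∞) + N p.2


namespace DSC
variable {V : Type*} [AddCommGroup V] [Module ℝ V] (N₀ N₁ : CoupleNorm V)

lemma norm_zero (N : CoupleNorm V) : N.N 0 = 0 := (N.eq_zero 0).mpr rfl

lemma Kfun_le (t : ℝ) (v u : V) :
    Kfun N₀.N N₁.N t v ≤ N₀.N u + ENNReal.ofReal t * N₁.N (v - u) := iInf_le _ u

lemma Kfun_le_left (t : ℝ) (v : V) : Kfun N₀.N N₁.N t v ≤ N₀.N v := by
  simpa [norm_zero] using Kfun_le N₀ N₁ t v v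

lemma Kfun_le_right (t : ℝ) (v : V) :
    Kfun N₀.N N₁.N t v ≤ ENNReal.ofReal t * N₁.N v := by
  simpa [norm_zero] using Kfun_le N₀ N₁ t v 0

lemma Kfun_zero (t : ℝ) : Kfun N₀.N N₁.N t 0 = 0 :=
  le_antisymm ((Kfun_le_left N₀ N₁ t 0).trans_eq (norm_zero N₀)) zero_le

lemma Kfun_add_le (t : ℝ) (v w : V) :
    Kfun N₀.N N₁.N t (v + w) ≤ Kfun N₀.N N₁.N t v + Kfun N₀.N N₁.N t w := by
  unfold Kfun
  rw [ENNReal.iInf_add]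
  refine le_iInf fun u => ?_
  rw [ENNReal.add_iInf]
  refine le_iInf fun u' => ?_
  refine le_trans (iInf_le _ (u + u')) ?_
  have h0 := N₀.add_le u u'
  have h1 := N₁.add_le (v - u) (w - u')
  have : v + w - (u + u') = (v - u) + (w - u') := by abel
  rw [this]
  calc N₀.N (u + u') + ENNReal.ofReal t * N₁.N ((v - u) + (w - u'))
      ≤ (N₀.N u + N₀.N u') + ENNReal.ofReal t * (N₁.N (v - u) + N₁.N (w - u')) := by
        gcongr
    _ = (N₀.N u + ENNReal.ofReal t * N₁.N (v - u)) + (N₀.N u' + ENNReal.ofReal t * N₁.N (w - u')) := by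
        ring
lemma Kfun_smul_le (t c : ℝ) (v : V) :
    Kfun N₀.N N₁.N t (c • v) ≤ (‖c‖₊ : ℝ≥0∞) * Kfun N₀.N N₁.N t v := by
  unfold Kfun
  rw [ENNReal.mul_iInf (by simp)]
  refine le_iInf fun u => ?_
  refine le_trans (iInf_le _ (c • u)) ?_
  have : c • v - c • u = c • (v - u) := by rw [smul_sub]
  rw [this, N₀.smul, N₁.smul]
  rw [mul_add]
  ring_nf
  exact le_rfl

lemma Kfun_smul (t c : ℝ) (v : V) :
    Kfun N₀.N N₁.N t (c • v) = (‖c‖₊ : ℝ≥0∞) * Kfun N₀.N N₁.N t v := by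
  rcases eq_or_ne c 0 with rfl | hc
  · simp only [zero_smul, nnnorm_zero, ENNReal.coe_zero, zero_mul]
    refine le_antisymm ?_ zero_le
    refine le_trans (iInf_le _ 0) ?_
    simp [(N₀.eq_zero 0).mpr rfl, (N₁.eq_zero 0).mpr rfl]
  · refine le_antisymm (Kfun_smul_le N₀ N₁ t c v) ?_
    have h2 := Kfun_smul_le N₀ N₁ t c⁻¹ (c • v)
    have : c⁻¹ • c • v = v := by rw [inv_smul_smul₀ hc]
    rw [this] at h2
    calc (‖c‖₊ : ℝ≥0∞) * Kfun N₀.N N₁.N t v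
        ≤ (‖c‖₊ : ℝ≥0∞) * ((‖c⁻¹‖₊ : ℝ≥0∞) * Kfun N₀.N N₁.N t (c • v)) := by gcongr
      _ = ((‖c‖₊ * ‖c⁻¹‖₊ : ℝ≥0) : ℝ≥0∞) * Kfun N₀.N N₁.N t (c • v) := by
          rw [ENNReal.coe_mul]; ring
      _ = Kfun N₀.N N₁.N t (c • v) := by
          rw [← nnnorm_mul, mul_inv_cancel₀ hc]; simp

lemma Kfun_mono (v : V) {t s : ℝ} (h : t ≤ s) :
    Kfun N₀.N N₁.N t v ≤ Kfun N₀.N N₁.N s v := by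
  refine iInf_mono fun u => ?_
  gcongr

lemma Kfun_scale (v : V) {t s : ℝ} (ht : 0 ≤ t) (h : t ≤ s) :
    ENNReal.ofReal t * Kfun N₀.N N₁.N s v ≤ ENNReal.ofReal s * Kfun N₀.N N₁.N t v := by
  unfold Kfun
  rw [ENNReal.mul_iInf (by simp), ENNReal.mul_iInf (by simp)]
  refine le_iInf fun u => le_trans (iInf_le _ u) ?_
  rw [mul_add, mul_add, ← mul_assoc, ← mul_assoc, ← ENNReal.ofReal_mul ht,
    ← ENNReal.ofReal_mul (le_trans ht h), mul_comm t s]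
  gcongr

-- t ≤ 1 : ofReal t * K 1 v ≤ K t v
lemma Kfun_lower (v : V) {t : ℝ} (ht : 0 ≤ t) (h1 : t ≤ 1) :
    ENNReal.ofReal t * Kfun N₀.N N₁.N 1 v ≤ Kfun N₀.N N₁.N t v := by
  simpa using Kfun_scale N₀ N₁ v ht h1

-- 1 ≤ t : K t v ≤ ofReal t * K 1 v
lemma Kfun_upper (v : V) {t : ℝ} (h1 : 1 ≤ t) :
    Kfun N₀.N N₁.N t v ≤ ENNReal.ofReal t * Kfun N₀.N N₁.N 1 v := by
  simpa using Kfun_scale N₀ N₁ v zero_le_one h1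
lemma ofReal_combo {s t : ℝ} (hs : 0 ≤ s) (ht : 0 ≤ t) (a b : ℝ≥0) :
    ENNReal.ofReal ((a:ℝ) * s + (b:ℝ) * t)
      = (a : ℝ≥0∞) * ENNReal.ofReal s + (b : ℝ≥0∞) * ENNReal.ofReal t := by
  rw [ENNReal.ofReal_add (by positivity) (by positivity),
    ENNReal.ofReal_mul (NNReal.coe_nonneg a), ENNReal.ofReal_mul (NNReal.coe_nonneg b)]
  simp [ENNReal.ofReal_coe_nnreal]

lemma Kfun_concave (v : V) : EConcaveOn (fun t => Kfun N₀.N N₁.N t v) := by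
  intro s t hs ht a b hab
  refine le_iInf fun u => ?_
  have h1 : (a : ℝ≥0∞) * Kfun N₀.N N₁.N s v
      ≤ (a : ℝ≥0∞) * (N₀.N u + ENNReal.ofReal s * N₁.N (v - u)) := by
    gcongr; exact iInf_le _ u
  have h2 : (b : ℝ≥0∞) * Kfun N₀.N N₁.N t v
      ≤ (b : ℝ≥0∞) * (N₀.N u + ENNReal.ofReal t * N₁.N (v - u)) := by
    gcongr; exact iInf_le _ u
  refine le_trans (add_le_add h1 h2) ?_
  rw [ofReal_combo hs.le ht.le]
  have hab' : (a : ℝ≥0∞) + (b : ℝ≥0∞) = 1 := by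
    rw [← ENNReal.coe_add, hab]; simp
  calc (a:ℝ≥0∞) * (N₀.N u + ENNReal.ofReal s * N₁.N (v - u))
        + (b:ℝ≥0∞) * (N₀.N u + ENNReal.ofReal t * N₁.N (v - u))
      = ((a:ℝ≥0∞) + b) * N₀.N u
        + ((a:ℝ≥0∞) * ENNReal.ofReal s + (b:ℝ≥0∞) * ENNReal.ofReal t) * N₁.N (v - u) := by
        ring
    _ = N₀.N u + ((a:ℝ≥0∞) * ENNReal.ofReal s + (b:ℝ≥0∞) * ENNReal.ofReal t) * N₁.N (v - u) := by
        rw [hab', one_mul]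
    _ ≤ _ := le_rfl

lemma min_concave (c : ℝ≥0∞) : EConcaveOn (fun t => ENNReal.ofReal (min 1 t) * c) := by
  intro s t hs ht a b hab
  have hab' : (a:ℝ) + (b:ℝ) = 1 := by exact_mod_cast congrArg (NNReal.toReal) hab
  calc (a:ℝ≥0∞) * (ENNReal.ofReal (min 1 s) * c) + (b:ℝ≥0∞) * (ENNReal.ofReal (min 1 t) * c)
      = ((a:ℝ≥0∞) * ENNReal.ofReal (min 1 s) + (b:ℝ≥0∞) * ENNReal.ofReal (min 1 t)) * c := by
        ring
    _ ≤ ENNReal.ofReal (min 1 ((a:ℝ) * s + (b:ℝ) * t)) * c := by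
        gcongr
        rw [← ofReal_combo (le_min zero_le_one hs.le) (le_min zero_le_one ht.le)]
        refine ENNReal.ofReal_le_ofReal ?_
        refine le_min ?_ ?_
        · calc (a:ℝ) * min 1 s + (b:ℝ) * min 1 t ≤ (a:ℝ) * 1 + (b:ℝ) * 1 := by
                gcongr <;> exact min_le_left _ _
            _ = 1 := by rw [mul_one, mul_one, hab']
        · gcongr <;> exact min_le_right _ _
lemma Kfun_prod (X : Type*) [NormedAddCommGroup X] [NormedSpace ℝ X] {t : ℝ} (ht : 0 < t) (x : X) (y : V) :
    Kfun (prodN X N₀.N) (prodN X N₁.N) t (x, y)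
      = ENNReal.ofReal (min 1 t) * (‖x‖₊ : ℝ≥0∞) + Kfun N₀.N N₁.N t y := by
  refine le_antisymm ?_ ?_
  · -- upper bound
    rcases le_or_gt t 1 with h1 | h1
    · rw [min_eq_right h1]
      unfold Kfun
      rw [ENNReal.add_iInf]
      refine le_iInf fun u₂ => ?_
      refine le_trans (iInf_le _ ((0 : X), u₂)) (le_of_eq ?_)
      simp only [prodN, Prod.fst_sub, Prod.snd_sub, Prod.fst, Prod.snd]
      simp only [nnnorm_zero, ENNReal.coe_zero, zero_add, sub_zero]
      ring
    · rw [min_eq_left h1.le]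
      unfold Kfun
      rw [ENNReal.add_iInf]
      refine le_iInf fun u₂ => ?_
      refine le_trans (iInf_le _ ((x : X), u₂)) (le_of_eq ?_)
      simp only [prodN, Prod.fst_sub, Prod.snd_sub]
      simp only [sub_self, nnnorm_zero, ENNReal.coe_zero, add_zero, zero_add]
      rw [ENNReal.ofReal_one, one_mul]
      ring
  · refine le_iInf fun u => ?_
    have hsub : (x, y) - u = (x - u.1, y - u.2) := rfl
    rw [hsub]
    simp only [prodN]
    have tri : (‖x‖₊ : ℝ≥0∞) ≤ (‖u.1‖₊ : ℝ≥0∞) + (‖x - u.1‖₊ : ℝ≥0∞) := by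
      rw [← ENNReal.coe_add]
      exact_mod_cast nnnorm_add_le u.1 (x - u.1) |>.trans_eq' (by rw [add_sub_cancel])
    have term1 : ENNReal.ofReal (min 1 t) * (‖x‖₊ : ℝ≥0∞)
        ≤ (‖u.1‖₊ : ℝ≥0∞) + ENNReal.ofReal t * (‖x - u.1‖₊ : ℝ≥0∞) := by
      rcases le_or_gt t 1 with h1 | h1
      · rw [min_eq_right h1]
        calc ENNReal.ofReal t * (‖x‖₊ : ℝ≥0∞)
            ≤ ENNReal.ofReal t * ((‖u.1‖₊ : ℝ≥0∞) + (‖x - u.1‖₊ : ℝ≥0∞)) := by gcongr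
          _ = ENNReal.ofReal t * (‖u.1‖₊ : ℝ≥0∞) + ENNReal.ofReal t * (‖x - u.1‖₊ : ℝ≥0∞) := by
              ring
          _ ≤ 1 * (‖u.1‖₊ : ℝ≥0∞) + ENNReal.ofReal t * (‖x - u.1‖₊ : ℝ≥0∞) := by
              gcongr
              exact ENNReal.ofReal_le_one.mpr h1
          _ = (‖u.1‖₊ : ℝ≥0∞) + ENNReal.ofReal t * (‖x - u.1‖₊ : ℝ≥0∞) := by rw [one_mul]
      · rw [min_eq_left h1.le, ENNReal.ofReal_one, one_mul]
        refine tri.trans ?_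
        gcongr
        calc (‖x - u.1‖₊ : ℝ≥0∞) = 1 * (‖x - u.1‖₊ : ℝ≥0∞) := (one_mul _).symm
          _ ≤ ENNReal.ofReal t * (‖x - u.1‖₊ : ℝ≥0∞) := by
              gcongr
              exact ENNReal.one_le_ofReal.mpr h1.le
    have term2 : Kfun N₀.N N₁.N t y ≤ N₀.N u.2 + ENNReal.ofReal t * N₁.N (y - u.2) :=
      iInf_le _ u.2
    calc ENNReal.ofReal (min 1 t) * (‖x‖₊:ℝ≥0∞) + Kfun N₀.N N₁.N t y
        ≤ ((‖u.1‖₊:ℝ≥0∞) + ENNReal.ofReal t * (‖x - u.1‖₊:ℝ≥0∞))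
          + (N₀.N u.2 + ENNReal.ofReal t * N₁.N (y - u.2)) := add_le_add term1 term2
      _ = (‖u.1‖₊:ℝ≥0∞) + N₀.N u.2 + ENNReal.ofReal t * ((‖x - u.1‖₊:ℝ≥0∞) + N₁.N (y - u.2)) := by
          ring
lemma Kfun_all_zero {y : V} (h : Kfun N₀.N N₁.N 1 y = 0) :
    ∀ t > (0:ℝ), Kfun N₀.N N₁.N t y = 0 := by
  intro t ht
  rcases le_or_gt t 1 with h1 | h1
  · exact le_antisymm ((Kfun_mono N₀ N₁ y h1).trans h.le) zero_le
  · refine le_antisymm ((Kfun_upper N₀ N₁ y h1.le).trans ?_) zero_le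
    rw [h, mul_zero]

lemma eq_zero_of_Kfun (hCald : UniformCalderon N₀.N N₁.N) {y : V}
    (h : Kfun N₀.N N₁.N 1 y = 0) : y = 0 := by
  obtain ⟨C, hC⟩ := hCald
  obtain ⟨T, hT, -⟩ := hC 0 y (fun t ht => by
    rw [Kfun_all_zero N₀ N₁ h t ht, Kfun_zero]
    )
  rw [← hT, map_zero]
lemma Kfun_le_coe {y : V} {c : ℝ≥0}
    (h : ∀ t > (0:ℝ), Kfun N₀.N N₁.N t y ≤ ENNReal.ofReal (min 1 t) * c)
    {t : ℝ} (ht : 0 < t) : Kfun N₀.N N₁.N t y ≤ (c : ℝ≥0∞) := by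
  refine (h t ht).trans ?_
  calc ENNReal.ofReal (min 1 t) * (c:ℝ≥0∞) ≤ 1 * (c:ℝ≥0∞) := by
        gcongr
        exact ENNReal.ofReal_le_one.mpr (min_le_left _ _)
    _ = c := one_mul _

lemma halve {a b : ℝ≥0∞} (ha : a ≠ ⊤) (hab : a ≤ b + a / 2) : a / 2 ≤ b := by
  have h2 : a / 2 + a / 2 ≤ b + a / 2 := by rw [ENNReal.add_halves]; exact hab
  exact (ENNReal.add_le_add_iff_right (by simp [ENNReal.div_eq_top, ha] : a / 2 ≠ ⊤)).mp h2

lemma le_double {a b : ℝ≥0∞} (h : a / 2 ≤ b) : a ≤ 2 * b := by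
  calc a = 2 * (a / 2) := (ENNReal.mul_div_cancel' (by norm_num) (by norm_num)).symm
    _ ≤ 2 * b := by gcongr

lemma quarter_le {δ c : ℝ≥0∞} (hδc : δ ≤ c) : δ / 4 ≤ c := by
  refine le_trans ?_ hδc
  apply ENNReal.div_le_of_le_mul
  calc δ = δ * 1 := (mul_one δ).symm
    _ ≤ δ * 4 := by gcongr; norm_num

lemma gagliardo (hCald : UniformCalderon N₀.N N₁.N) (y : V) (c : ℝ≥0)
    (h : ∀ t > (0:ℝ), Kfun N₀.N N₁.N t y ≤ ENNReal.ofReal (min 1 t) * c) :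
    N₀.N y ≠ ⊤ ∧ N₁.N y ≠ ⊤ := by
  obtain ⟨C, hC⟩ := hCald
  set δ : ℝ≥0∞ := Kfun N₀.N N₁.N 1 y with hδdef
  rcases eq_or_ne δ 0 with hδ0 | hδ0
  · have hy : y = 0 := eq_zero_of_Kfun N₀ N₁ ⟨C, hC⟩ hδ0
    subst hy
    simp [norm_zero]
  · have hδc : δ ≤ (c : ℝ≥0∞) := Kfun_le_coe N₀ N₁ h one_pos
    have hδtop : δ ≠ ⊤ := ne_top_of_le_ne_top ENNReal.coe_ne_top hδc
    set d : ℝ≥0 := δ.toNNReal with hddef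
    have hd : (d : ℝ≥0∞) = δ := ENNReal.coe_toNNReal hδtop
    have hd0 : d ≠ 0 := by
      intro h0
      exact hδ0 (by rw [← hd, h0, ENNReal.coe_zero])
    have hdc : d ≤ c := by
      rw [← ENNReal.coe_le_coe, hd]; exact hδc
    have hc0 : c ≠ 0 := fun h0 => hd0 (le_antisymm (h0 ▸ hdc) zero_le)
    set m : ℝ≥0 := 2 * c / d with hmdef
    have hm0 : m ≠ 0 := by
      rw [hmdef]
      simp only [Ne, div_eq_zero_iff, mul_eq_zero]
      push_neg
      exact ⟨⟨by norm_num, hc0⟩, fun h' => absurd h' hd0⟩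
    have hm2 : ((2:ℝ≥0∞)) ≤ (m : ℝ≥0∞) := by
      have h2m : (2:ℝ≥0) ≤ m := by
        rw [hmdef, le_div_iff₀ (pos_iff_ne_zero.mpr hd0)]
        exact mul_le_mul_right hdc 2
      exact_mod_cast h2m
    have hmd : (m : ℝ≥0∞) * (δ / 2) = (c : ℝ≥0∞) := by
      have h1 : ((d/2 : ℝ≥0) : ℝ≥0∞) = (d : ℝ≥0∞) / 2 := by
        rw [ENNReal.coe_div (by norm_num)]; norm_num
      rw [← hd, ← h1, ← ENNReal.coe_mul]
      congr 1
      rw [hmdef]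
      field_simp
    have hmnn : ‖((m:ℝ≥0):ℝ)‖₊ = m := by simp
    constructor
    · -- N₀.N y ≠ ⊤
      set σ : ℝ≥0∞ := 4 * c / δ with hσdef
      have hσtop : σ ≠ ⊤ := by
        simp only [hσdef, Ne, ENNReal.div_eq_top]
        push_neg
        exact ⟨fun _ => hδ0, fun h' => absurd h' (by finiteness)⟩
      set s : ℝ := max 1 σ.toReal with hsdef
      have hs1 : (1:ℝ) ≤ s := le_max_left _ _
      have hs0 : (0:ℝ) < s := lt_of_lt_of_le one_pos hs1
      have hσs : σ ≤ ENNReal.ofReal s :=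
        (ENNReal.le_ofReal_iff_toReal_le hσtop (by linarith)).mpr (le_max_right _ _)
      have key4c : (4 * c : ℝ≥0∞) ≤ ENNReal.ofReal s * δ := by
        calc (4 * c : ℝ≥0∞) = σ * δ := by rw [hσdef, ENNReal.div_mul_cancel hδ0 hδtop]
          _ ≤ ENNReal.ofReal s * δ := by gcongr
      have hKs_top : Kfun N₀.N N₁.N s y ≠ ⊤ :=
        ne_top_of_le_ne_top ENNReal.coe_ne_top (Kfun_le_coe N₀ N₁ h hs0)
      have hlt : Kfun N₀.N N₁.N s y < Kfun N₀.N N₁.N s y + δ / 4 :=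
        ENNReal.lt_add_right hKs_top (by simp [hδ0])
      obtain ⟨a, ha⟩ := iInf_lt_iff.mp (show (⨅ u : V, N₀.N u
          + ENNReal.ofReal s * N₁.N (y - u)) < Kfun N₀.N N₁.N s y + δ / 4 from hlt)
      set b := y - a with hbdef
      have hyab : y = a + b := by rw [hbdef]; abel
      have htot : N₀.N a + ENNReal.ofReal s * N₁.N b ≤ 2 * c := by
        refine ha.le.trans ?_
        calc Kfun N₀.N N₁.N s y + δ / 4 ≤ (c:ℝ≥0∞) + c :=
              add_le_add (Kfun_le_coe N₀ N₁ h hs0) (quarter_le hδc)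
          _ = 2 * c := by ring
      have hN0a : N₀.N a ≤ 2 * c := le_trans le_self_add htot
      have hN1b : N₁.N b ≤ δ / 2 := by
        have h1 : ENNReal.ofReal s * N₁.N b ≤ 2 * c := le_trans le_add_self htot
        have h2 : (2 * c : ℝ≥0∞) ≤ ENNReal.ofReal s * (δ / 2) := by
          have h3 : (2 * c : ℝ≥0∞) = (4 * c) / 2 := by
            rw [ENNReal.eq_div_iff (by norm_num) (by norm_num)]
            ring
          rw [h3, ← mul_div_assoc]
          exact ENNReal.div_le_div_right key4c 2
        exact (ENNReal.mul_le_mul_iff_right (by simp [hs0]) ENNReal.ofReal_ne_top).mp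
          (h1.trans h2)
      have hK1b : Kfun N₀.N N₁.N 1 b ≤ δ / 2 := by
        refine le_trans (Kfun_le_right N₀ N₁ 1 b) ?_
        rw [ENNReal.ofReal_one, one_mul]
        exact hN1b
      have hK1a : δ / 2 ≤ Kfun N₀.N N₁.N 1 a := by
        refine halve hδtop ?_
        calc δ = Kfun N₀.N N₁.N 1 y := hδdef
          _ = Kfun N₀.N N₁.N 1 (a + b) := by rw [← hyab]
          _ ≤ Kfun N₀.N N₁.N 1 a + Kfun N₀.N N₁.N 1 b := Kfun_add_le N₀ N₁ 1 a b
          _ ≤ Kfun N₀.N N₁.N 1 a + δ / 2 := by gcongr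
      have claim : ∀ t > (0:ℝ), Kfun N₀.N N₁.N t y ≤ Kfun N₀.N N₁.N t (((m:ℝ≥0):ℝ) • a) := by
        intro t ht
        rw [Kfun_smul, hmnn]
        rcases le_or_gt t 1 with h1 | h1
        · have hktop : Kfun N₀.N N₁.N t y ≠ ⊤ :=
            ne_top_of_le_ne_top ENNReal.coe_ne_top (Kfun_le_coe N₀ N₁ h ht)
          have hsum : Kfun N₀.N N₁.N t y
              ≤ Kfun N₀.N N₁.N t a + Kfun N₀.N N₁.N t b := by
            conv_lhs => rw [hyab]
            exact Kfun_add_le N₀ N₁ t a b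
          have hb2 : Kfun N₀.N N₁.N t b ≤ Kfun N₀.N N₁.N t y / 2 := by
            calc Kfun N₀.N N₁.N t b ≤ ENNReal.ofReal t * N₁.N b := Kfun_le_right N₀ N₁ t b
              _ ≤ ENNReal.ofReal t * (δ / 2) := by gcongr
              _ = (ENNReal.ofReal t * δ) / 2 := (mul_div_assoc _ _ _).symm
              _ ≤ Kfun N₀.N N₁.N t y / 2 :=
                  ENNReal.div_le_div_right (Kfun_lower N₀ N₁ y ht.le h1) 2
          have hfin : Kfun N₀.N N₁.N t y
              ≤ Kfun N₀.N N₁.N t a + Kfun N₀.N N₁.N t y / 2 :=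
            hsum.trans (by gcongr)
          refine (le_double (halve hktop hfin)).trans ?_
          gcongr
        · calc Kfun N₀.N N₁.N t y ≤ (c : ℝ≥0∞) := Kfun_le_coe N₀ N₁ h ht
            _ = (m:ℝ≥0∞) * (δ / 2) := hmd.symm
            _ ≤ (m:ℝ≥0∞) * Kfun N₀.N N₁.N 1 a := by gcongr
            _ ≤ (m:ℝ≥0∞) * Kfun N₀.N N₁.N t a := by
                gcongr
                exact Kfun_mono N₀ N₁ a h1.le
      obtain ⟨T, hT, hTb⟩ := hC (((m:ℝ≥0):ℝ) • a) y claim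
      have hb' := (hTb (((m:ℝ≥0):ℝ) • a)).1
      rw [hT] at hb'
      have heq : N₀.N (((m:ℝ≥0):ℝ) • a) = (m:ℝ≥0∞) * N₀.N a := by rw [N₀.smul, hmnn]
      have hbound : N₀.N y ≤ (C:ℝ≥0∞) * ((m:ℝ≥0∞) * (2 * c)) := by
        refine hb'.trans ?_
        rw [heq]
        gcongr
      exact ne_top_of_le_ne_top (by finiteness) hbound
    · -- N₁.N y ≠ ⊤
      set e : ℝ≥0 := d / (4 * c) with hedef
      have he0 : e ≠ 0 := by
        rw [hedef]
        simp only [Ne, div_eq_zero_iff, mul_eq_zero]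
        push_neg
        exact ⟨hd0, by norm_num, hc0⟩
      have he1 : e ≤ 1 := by
        rw [hedef, div_le_one (by positivity)]
        calc d ≤ c := hdc
          _ = 1 * c := (one_mul c).symm
          _ ≤ 4 * c := by gcongr; norm_num
      set s₂ : ℝ := ((e:ℝ≥0):ℝ) with hs₂def
      have hs₂pos : (0:ℝ) < s₂ := by
        rw [hs₂def]
        exact_mod_cast pos_iff_ne_zero.mpr he0
      have hs₂le1 : s₂ ≤ 1 := by exact_mod_cast he1
      have hofs₂ : ENNReal.ofReal s₂ = (e : ℝ≥0∞) := ENNReal.ofReal_coe_nnreal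
      have he2c : (e : ℝ≥0∞) * (2 * c) = δ / 2 := by
        have h1 : ((d/2 : ℝ≥0) : ℝ≥0∞) = (d : ℝ≥0∞) / 2 := by
          rw [ENNReal.coe_div (by norm_num)]; norm_num
        rw [← hd, ← h1, show ((2:ℝ≥0∞) * c) = (((2 * c : ℝ≥0)):ℝ≥0∞) by norm_num,
          ← ENNReal.coe_mul]
        congr 1
        rw [hedef]
        field_simp
        ring
      have hKs_top : Kfun N₀.N N₁.N s₂ y ≠ ⊤ :=
        ne_top_of_le_ne_top ENNReal.coe_ne_top (Kfun_le_coe N₀ N₁ h hs₂pos)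
      have hlt : Kfun N₀.N N₁.N s₂ y < Kfun N₀.N N₁.N s₂ y + (e:ℝ≥0∞) * (δ / 4) := by
        refine ENNReal.lt_add_right hKs_top ?_
        simp [he0, hδ0]
      obtain ⟨a', ha'⟩ := iInf_lt_iff.mp (show (⨅ u : V, N₀.N u
          + ENNReal.ofReal s₂ * N₁.N (y - u)) < Kfun N₀.N N₁.N s₂ y + (e:ℝ≥0∞) * (δ / 4)
          from hlt)
      set b' := y - a' with hb'def
      have hyab' : y = a' + b' := by rw [hb'def]; abel
      have htot' : N₀.N a' + ENNReal.ofReal s₂ * N₁.N b' ≤ (e:ℝ≥0∞) * (2 * c) := by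
        refine ha'.le.trans ?_
        have hKs₂ : Kfun N₀.N N₁.N s₂ y ≤ (e:ℝ≥0∞) * c := by
          refine (h s₂ hs₂pos).trans ?_
          rw [min_eq_right hs₂le1, hofs₂]
        calc Kfun N₀.N N₁.N s₂ y + (e:ℝ≥0∞) * (δ / 4)
            ≤ (e:ℝ≥0∞) * c + (e:ℝ≥0∞) * c := add_le_add hKs₂ (by gcongr; exact quarter_le hδc)
          _ = (e:ℝ≥0∞) * (2 * c) := by ring
      have hN0a' : N₀.N a' ≤ δ / 2 := by
        refine le_trans (le_trans le_self_add htot') ?_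
        rw [he2c]
      have hN1b' : N₁.N b' ≤ 2 * c := by
        have h1 : ENNReal.ofReal s₂ * N₁.N b' ≤ (e:ℝ≥0∞) * (2 * c) :=
          le_trans le_add_self htot'
        rw [hofs₂] at h1
        exact (ENNReal.mul_le_mul_iff_right (by exact_mod_cast he0) ENNReal.coe_ne_top).mp h1
      have hK1a' : Kfun N₀.N N₁.N 1 a' ≤ δ / 2 := (Kfun_le_left N₀ N₁ 1 a').trans hN0a'
      have hK1b' : δ / 2 ≤ Kfun N₀.N N₁.N 1 b' := by
        refine halve hδtop ?_
        calc δ = Kfun N₀.N N₁.N 1 (a' + b') := by rw [← hyab']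
          _ ≤ Kfun N₀.N N₁.N 1 a' + Kfun N₀.N N₁.N 1 b' := Kfun_add_le N₀ N₁ 1 a' b'
          _ ≤ δ / 2 + Kfun N₀.N N₁.N 1 b' := by gcongr
          _ = Kfun N₀.N N₁.N 1 b' + δ / 2 := add_comm _ _
      have claim2 : ∀ t > (0:ℝ), Kfun N₀.N N₁.N t y ≤ Kfun N₀.N N₁.N t (((m:ℝ≥0):ℝ) • b') := by
        intro t ht
        rw [Kfun_smul, hmnn]
        rcases le_or_gt t 1 with h1 | h1
        · calc Kfun N₀.N N₁.N t y ≤ ENNReal.ofReal (min 1 t) * c := h t ht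
            _ = ENNReal.ofReal t * ((m:ℝ≥0∞) * (δ / 2)) := by rw [min_eq_right h1, hmd]
            _ = (m:ℝ≥0∞) * (ENNReal.ofReal t * (δ / 2)) := by ring
            _ ≤ (m:ℝ≥0∞) * (ENNReal.ofReal t * Kfun N₀.N N₁.N 1 b') := by gcongr
            _ ≤ (m:ℝ≥0∞) * Kfun N₀.N N₁.N t b' := by
                gcongr
                exact Kfun_lower N₀ N₁ b' ht.le h1
        · have hktop : Kfun N₀.N N₁.N t y ≠ ⊤ :=
            ne_top_of_le_ne_top ENNReal.coe_ne_top (Kfun_le_coe N₀ N₁ h ht)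
          have hsum : Kfun N₀.N N₁.N t y
              ≤ Kfun N₀.N N₁.N t a' + Kfun N₀.N N₁.N t b' := by
            conv_lhs => rw [hyab']
            exact Kfun_add_le N₀ N₁ t a' b'
          have ha2 : Kfun N₀.N N₁.N t a' ≤ Kfun N₀.N N₁.N t y / 2 := by
            refine le_trans ((Kfun_le_left N₀ N₁ t a').trans hN0a') ?_
            refine ENNReal.div_le_div_right ?_ 2
            exact Kfun_mono N₀ N₁ y h1.le
          have hfin : Kfun N₀.N N₁.N t y
              ≤ Kfun N₀.N N₁.N t b' + Kfun N₀.N N₁.N t y / 2 := by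
            refine hsum.trans ?_
            rw [add_comm (Kfun N₀.N N₁.N t a')]
            gcongr
          refine (le_double (halve hktop hfin)).trans ?_
          gcongr
      obtain ⟨T, hT, hTb⟩ := hC (((m:ℝ≥0):ℝ) • b') y claim2
      have hby := (hTb (((m:ℝ≥0):ℝ) • b')).2
      rw [hT] at hby
      have heq : N₁.N (((m:ℝ≥0):ℝ) • b') = (m:ℝ≥0∞) * N₁.N b' := by rw [N₁.smul, hmnn]
      have hbound : N₁.N y ≤ (C:ℝ≥0∞) * ((m:ℝ≥0∞) * (2 * c)) := by
        refine hby.trans ?_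
        rw [heq]
        gcongr
      exact ne_top_of_le_ne_top (by finiteness) hbound

def Wspace : Submodule ℝ V where
  carrier := {y | Kfun N₀.N N₁.N 1 y ≠ ⊤}
  add_mem' := by
    intro a b ha hb
    simp only [Set.mem_setOf_eq] at *
    exact ne_top_of_le_ne_top (by simp [ha, hb, ENNReal.add_ne_top])
      (Kfun_add_le N₀ N₁ 1 a b)
  zero_mem' := by
    simp only [Set.mem_setOf_eq, Kfun_zero]
    exact ENNReal.zero_ne_top
  smul_mem' := by
    intro c x hx
    simp only [Set.mem_setOf_eq] at *
    rw [Kfun_smul]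
    exact ENNReal.mul_ne_top ENNReal.coe_ne_top hx

lemma mem_Wspace {y : V} : y ∈ Wspace N₀ N₁ ↔ Kfun N₀.N N₁.N 1 y ≠ ⊤ := Iff.rfl

lemma exists_ann {y₁ : V} (hy₁ : Kfun N₀.N N₁.N 1 y₁ = ⊤) :
    ∃ η : V →ₗ[ℝ] ℝ, η y₁ = 1 ∧ ∀ y : V, Kfun N₀.N N₁.N 1 y ≠ ⊤ → η y = 0 := by
  set W := Wspace N₀ N₁ with hW
  have hv : (W.mkQ y₁ : V ⧸ W) ≠ 0 := by
    rw [Submodule.mkQ_apply, Ne, Submodule.Quotient.mk_eq_zero]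
    intro hmem
    exact (mem_Wspace N₀ N₁).mp hmem hy₁
  set f₀ := LinearPMap.mkSpanSingleton (K := ℝ) (L := ℝ) (σ := RingHom.id ℝ) (W.mkQ y₁) (1:ℝ) hv with hf₀
  obtain ⟨g, hg⟩ := LinearMap.exists_extend f₀.toFun
  refine ⟨g.comp W.mkQ, ?_, ?_⟩
  · have h1 : g (W.mkQ y₁) = f₀ ⟨W.mkQ y₁, Submodule.mem_span_singleton_self _⟩ := by
      have := LinearMap.congr_fun hg ⟨W.mkQ y₁, Submodule.mem_span_singleton_self _⟩
      simpa using this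
    have h2 : f₀ ⟨W.mkQ y₁, Submodule.mem_span_singleton_self _⟩ = 1 :=
      LinearPMap.mkSpanSingleton_apply ℝ ℝ hv 1
    simp only [LinearMap.comp_apply]
    rw [h1, h2]
  · intro y hy
    have hmem : y ∈ W := (mem_Wspace N₀ N₁).mpr hy
    simp only [LinearMap.comp_apply, Submodule.mkQ_apply]
    rw [(Submodule.Quotient.mk_eq_zero W).mpr hmem, map_zero]

lemma exists_dual_K {y₁ : V} (hfin : Kfun N₀.N N₁.N 1 y₁ ≠ ⊤)
    (hpos : Kfun N₀.N N₁.N 1 y₁ ≠ 0) :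
    ∃ η : V →ₗ[ℝ] ℝ, η y₁ = 1 ∧ ∀ y : V, Kfun N₀.N N₁.N 1 y ≠ ⊤ →
      (‖η y‖₊ : ℝ≥0∞) * Kfun N₀.N N₁.N 1 y₁ ≤ Kfun N₀.N N₁.N 1 y := by
  set W := Wspace N₀ N₁ with hW
  have hy₁W : y₁ ∈ W := (mem_Wspace N₀ N₁).mpr hfin
  set κ : ℝ := (Kfun N₀.N N₁.N 1 y₁).toReal with hκdef
  have hκpos : 0 < κ := ENNReal.toReal_pos hpos hfin
  have hy₁ne : y₁ ≠ 0 := by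
    intro h0
    rw [h0, Kfun_zero] at hpos
    exact hpos rfl
  have hvne : (⟨y₁, hy₁W⟩ : W) ≠ 0 := by
    intro h0
    exact hy₁ne (by simpa using congrArg (Subtype.val) h0)
  -- sublinear functional on W
  set q : W → ℝ := fun w => (Kfun N₀.N N₁.N 1 (w : V)).toReal with hq
  have hq_fin : ∀ w : W, Kfun N₀.N N₁.N 1 (w : V) ≠ ⊤ := fun w => (mem_Wspace N₀ N₁).mp w.2
  have hq_hom : ∀ c : ℝ, 0 < c → ∀ w : W, q (c • w) = c * q w := by
    intro c hc w
    simp only [hq, Submodule.coe_smul]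
    rw [Kfun_smul, ENNReal.toReal_mul]
    congr 1
    simp [Real.norm_of_nonneg hc.le]
  have hq_add : ∀ w₁ w₂ : W, q (w₁ + w₂) ≤ q w₁ + q w₂ := by
    intro w₁ w₂
    simp only [hq, Submodule.coe_add]
    rw [← ENNReal.toReal_add (hq_fin w₁) (hq_fin w₂)]
    exact ENNReal.toReal_mono (by simp [ENNReal.add_ne_top, hq_fin w₁, hq_fin w₂])
      (Kfun_add_le N₀ N₁ 1 _ _)
  set f₀ := LinearPMap.mkSpanSingleton (K := ℝ) (L := ℝ) (σ := RingHom.id ℝ) (⟨y₁, hy₁W⟩ : W) κ hvne with hf₀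
  have hf₀le : ∀ x : f₀.domain, f₀ x ≤ q x := by
    rintro ⟨x, hx⟩
    obtain ⟨c, rfl⟩ := Submodule.mem_span_singleton.mp hx
    have happ : f₀ ⟨c • ⟨y₁, hy₁W⟩, hx⟩ = c • κ :=
      LinearPMap.mkSpanSingleton'_apply _ _ _ c hx
    rw [happ]
    have hqval : q (c • ⟨y₁, hy₁W⟩) = |c| * κ := by
      simp only [hq, Submodule.coe_smul]
      rw [Kfun_smul, ENNReal.toReal_mul]
      congr 1 <;> try simp [Real.norm_eq_abs]
    rw [hqval]
    calc c • κ = c * κ := rfl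
      _ ≤ |c| * κ := by
          gcongr
          exact le_abs_self c
  obtain ⟨g, hgf, hgle⟩ := exists_extension_of_le_sublinear f₀ q hq_hom hq_add hf₀le
  have habs : ∀ w : W, |g w| ≤ q w := by
    intro w
    rcases abs_cases (g w) with ⟨he, -⟩ | ⟨he, -⟩
    · rw [he]; exact hgle w
    · rw [he]
      have : g (-w) ≤ q (-w) := hgle (-w)
      rw [map_neg] at this
      have hqneg : q (-w) = q w := by
        simp only [hq, Submodule.coe_neg]
        have : (-(w:V)) = (-1 : ℝ) • (w : V) := by simp
        rw [this, Kfun_smul]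
        norm_num
      rw [hqneg] at this
      linarith
  have hgy₁ : g ⟨y₁, hy₁W⟩ = κ := by
    have := hgf ⟨⟨y₁, hy₁W⟩, Submodule.mem_span_singleton_self _⟩
    rw [this]
    exact LinearPMap.mkSpanSingleton_apply ℝ ℝ hvne κ
  obtain ⟨G, hG⟩ := LinearMap.exists_extend g
  refine ⟨κ⁻¹ • G, ?_, ?_⟩
  · have hGy₁ : G y₁ = κ := by
      have := LinearMap.congr_fun hG ⟨y₁, hy₁W⟩
      simpa [hgy₁] using this
    simp [hGy₁, inv_mul_cancel₀ hκpos.ne']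
  · intro y hy
    have hyW : y ∈ W := (mem_Wspace N₀ N₁).mpr hy
    have hGy : G y = g ⟨y, hyW⟩ := by
      have := LinearMap.congr_fun hG ⟨y, hyW⟩
      simpa using this
    have hb : |κ⁻¹ * G y| * κ ≤ (Kfun N₀.N N₁.N 1 y).toReal := by
      rw [abs_mul, abs_of_nonneg (inv_nonneg.mpr hκpos.le), hGy]
      have h1 : |g ⟨y, hyW⟩| ≤ (Kfun N₀.N N₁.N 1 y).toReal := habs ⟨y, hyW⟩
      calc κ⁻¹ * |g ⟨y, hyW⟩| * κ = |g ⟨y, hyW⟩| * (κ⁻¹ * κ) := by ring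
        _ = |g ⟨y, hyW⟩| := by rw [inv_mul_cancel₀ hκpos.ne', mul_one]
        _ ≤ (Kfun N₀.N N₁.N 1 y).toReal := h1
    have hcoe : ((‖(κ⁻¹ • G) y‖₊ : ℝ≥0) : ℝ≥0∞) = ENNReal.ofReal |κ⁻¹ * G y| := by
      rw [← Real.enorm_eq_ofReal_abs, enorm_eq_nnnorm]
      try simp [LinearMap.smul_apply]
      try rfl
    rw [hcoe, ← ENNReal.ofReal_toReal hfin, ← hκdef, ← ENNReal.ofReal_mul (abs_nonneg _)]
    exact (ENNReal.ofReal_le_ofReal hb).trans (by rw [ENNReal.ofReal_toReal hy])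

end DSC

open DSC

/-- If `(Y₀, Y₁)` is a uniform Calderón couple which is Gagliardo complete (so that
K-divisibility holds with constant `γ`) and `X` is a Banach space, then
`(X ⊕₁ Y₀, X ⊕₁ Y₁)` is a Calderón couple. -/
theorem direct_sum_calderon
    (X : Type*) [NormedAddCommGroup X] [NormedSpace ℝ X] [CompleteSpace X]
    (V : Type*) [AddCommGroup V] [Module ℝ V]
    (N₀ N₁ : CoupleNorm V)
    (hCald : UniformCalderon N₀.N N₁.N)
    (γ : ℝ≥0) (hγ : 1 ≤ γ) (hdiv : KDivisible N₀.N N₁.N γ) :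
    ∀ (x₀ x₁ : X) (y₀ y₁ : V),
      (∀ t > (0 : ℝ),
        Kfun (prodN X N₀.N) (prodN X N₁.N) t (x₀, y₀) ≤
          Kfun (prodN X N₀.N) (prodN X N₁.N) t (x₁, y₁)) →
      ∃ S : (X × V) →ₗ[ℝ] X × V, S (x₁, y₁) = (x₀, y₀) ∧
        ∃ C : ℝ≥0, ∀ z : X × V,
          prodN X N₀.N (S z) ≤ (C : ℝ≥0∞) * prodN X N₀.N z ∧
          prodN X N₁.N (S z) ≤ (C : ℝ≥0∞) * prodN X N₁.N z := by
  intro x₀ x₁ y₀ y₁ hyp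
  obtain ⟨C, hC⟩ := hCald
  have hCald' : UniformCalderon N₀.N N₁.N := ⟨C, hC⟩
  have star : ∀ t > (0:ℝ), ENNReal.ofReal (min 1 t) * (‖x₀‖₊:ℝ≥0∞) + Kfun N₀.N N₁.N t y₀
      ≤ ENNReal.ofReal (min 1 t) * (‖x₁‖₊:ℝ≥0∞) + Kfun N₀.N N₁.N t y₁ := by
    intro t ht
    have h := hyp t ht
    rwa [Kfun_prod N₀ N₁ X ht x₀ y₀, Kfun_prod N₀ N₁ X ht x₁ y₁] at h
  have starK : ∀ t > (0:ℝ), Kfun N₀.N N₁.N t y₀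
      ≤ ENNReal.ofReal (min 1 t) * (‖x₁‖₊:ℝ≥0∞) + Kfun N₀.N N₁.N t y₁ :=
    fun t ht => le_trans le_add_self (star t ht)
  by_cases hx₁ : x₁ = 0
  · -- Case B : x₁ = 0
    subst hx₁
    have star' : ∀ t > (0:ℝ), ENNReal.ofReal (min 1 t) * (‖x₀‖₊:ℝ≥0∞)
        + Kfun N₀.N N₁.N t y₀ ≤ Kfun N₀.N N₁.N t y₁ := by
      intro t ht
      have := star t ht
      simpa using this
    have hKle : ∀ t > (0:ℝ), Kfun N₀.N N₁.N t y₀ ≤ Kfun N₀.N N₁.N t y₁ :=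
      fun t ht => le_trans le_add_self (star' t ht)
    obtain ⟨T, hT, hTb⟩ := hC y₁ y₀ hKle
    by_cases hx₀ : x₀ = 0
    · -- B1 : x₀ = 0
      subst hx₀
      refine ⟨LinearMap.prod 0 (T.comp (LinearMap.snd ℝ X V)), by simp [hT], C + 1, ?_⟩
      intro z
      constructor
      · calc prodN X N₀.N ((LinearMap.prod 0 (T.comp (LinearMap.snd ℝ X V))) z)
            = N₀.N (T z.2) := by simp [prodN]
          _ ≤ (C:ℝ≥0∞) * N₀.N z.2 := (hTb z.2).1
          _ ≤ ((C+1:ℝ≥0):ℝ≥0∞) * ((‖z.1‖₊:ℝ≥0∞) + N₀.N z.2) := by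
              push_cast
              gcongr <;> simp
      · calc prodN X N₁.N ((LinearMap.prod 0 (T.comp (LinearMap.snd ℝ X V))) z)
            = N₁.N (T z.2) := by simp [prodN]
          _ ≤ (C:ℝ≥0∞) * N₁.N z.2 := (hTb z.2).2
          _ ≤ ((C+1:ℝ≥0):ℝ≥0∞) * ((‖z.1‖₊:ℝ≥0∞) + N₁.N z.2) := by
              push_cast
              gcongr <;> simp
    · -- B2/B3 : x₀ ≠ 0
      have hx₀K : (‖x₀‖₊:ℝ≥0∞) ≤ Kfun N₀.N N₁.N 1 y₁ := by
        have := star' 1 one_pos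
        simp only [min_self, ENNReal.ofReal_one, one_mul] at this
        exact le_trans le_self_add this
      have hκ0 : Kfun N₀.N N₁.N 1 y₁ ≠ 0 := by
        intro h0
        rw [h0] at hx₀K
        simp only [nonpos_iff_eq_zero, ENNReal.coe_eq_zero, nnnorm_eq_zero] at hx₀K
        exact hx₀ hx₀K
      -- get the functional η
      have hη : ∃ η : V →ₗ[ℝ] ℝ, η y₁ = 1 ∧ ∀ y : V, Kfun N₀.N N₁.N 1 y ≠ ⊤ →
          ((‖η y‖₊ : ℝ≥0) : ℝ≥0∞) * (‖x₀‖₊:ℝ≥0∞) ≤ Kfun N₀.N N₁.N 1 y := by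
        by_cases hκtop : Kfun N₀.N N₁.N 1 y₁ = ⊤
        · obtain ⟨η, hη1, hη0⟩ := exists_ann N₀ N₁ hκtop
          exact ⟨η, hη1, fun y hy => by rw [hη0 y hy]; simp⟩
        · obtain ⟨η, hη1, hηb⟩ := exists_dual_K N₀ N₁ hκtop hκ0
          refine ⟨η, hη1, fun y hy => le_trans ?_ (hηb y hy)⟩
          gcongr
      obtain ⟨η, hη1, hηb⟩ := hη
      set S : (X × V) →ₗ[ℝ] X × V := LinearMap.prod
        ((LinearMap.toSpanSingleton ℝ X x₀).comp (η.comp (LinearMap.snd ℝ X V)))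
        (T.comp (LinearMap.snd ℝ X V)) with hSdef
      have hSapp : ∀ z : X × V, S z = (η z.2 • x₀, T z.2) := by
        intro z
        simp [hSdef, LinearMap.toSpanSingleton_apply]
      refine ⟨S, ?_, C + 1, ?_⟩
      · rw [hSapp (0, y₁)]
        simp [hη1, hT]
      · intro z
        have key : ∀ (M : CoupleNorm V), (∀ y, Kfun N₀.N N₁.N 1 y ≤ M.N y) →
            (∀ w, M.N (T w) ≤ (C:ℝ≥0∞) * M.N w) →
            prodN X M.N (S z) ≤ ((C+1:ℝ≥0):ℝ≥0∞) * prodN X M.N z := by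
          intro M hKM hTM
          rw [hSapp z]
          simp only [prodN]
          rcases eq_or_ne (M.N z.2) ⊤ with htop | htop
          · rw [htop]
            rw [add_top, ENNReal.mul_top (ENNReal.coe_ne_zero.mpr (by simp))]
            exact le_top
          · have hKz : Kfun N₀.N N₁.N 1 z.2 ≠ ⊤ :=
              ne_top_of_le_ne_top htop (hKM z.2)
            have h1 : (‖η z.2 • x₀‖₊ : ℝ≥0∞) ≤ M.N z.2 := by
              rw [nnnorm_smul, ENNReal.coe_mul]
              exact le_trans (le_trans (hηb z.2 hKz) (hKM z.2)) le_rfl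
            calc (‖η z.2 • x₀‖₊ : ℝ≥0∞) + M.N (T z.2)
                ≤ M.N z.2 + (C:ℝ≥0∞) * M.N z.2 := add_le_add h1 (hTM z.2)
              _ = ((C+1:ℝ≥0):ℝ≥0∞) * M.N z.2 := by push_cast; ring
              _ ≤ ((C+1:ℝ≥0):ℝ≥0∞) * ((‖z.1‖₊:ℝ≥0∞) + M.N z.2) := by gcongr; simp
        constructor
        · refine key N₀ (fun y => Kfun_le_left N₀ N₁ 1 y) (fun w => (hTb w).1)
        · refine key N₁ (fun y => by
            simpa using Kfun_le_right N₀ N₁ 1 y) (fun w => (hTb w).2)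
  · -- Case A : x₁ ≠ 0
    obtain ⟨u, v, hy₀uv, hu, hv⟩ := hdiv y₀
      (fun t => ENNReal.ofReal (min 1 t) * (‖x₁‖₊:ℝ≥0∞))
      (fun t => Kfun N₀.N N₁.N t y₁)
      (min_concave (‖x₁‖₊:ℝ≥0∞)) (Kfun_concave N₀ N₁ y₁) starK
    have hγnn : ‖((γ:ℝ≥0):ℝ)‖₊ = γ := by simp
    have hvK : ∀ t > (0:ℝ), Kfun N₀.N N₁.N t v ≤ Kfun N₀.N N₁.N t (((γ:ℝ≥0):ℝ) • y₁) := by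
      intro t ht
      rw [Kfun_smul, hγnn]
      exact hv t ht
    obtain ⟨T, hT, hTb⟩ := hC (((γ:ℝ≥0):ℝ) • y₁) v hvK
    have huK : ∀ t > (0:ℝ), Kfun N₀.N N₁.N t u
        ≤ ENNReal.ofReal (min 1 t) * ((γ * ‖x₁‖₊ : ℝ≥0):ℝ≥0∞) := by
      intro t ht
      refine (hu t ht).trans (le_of_eq ?_)
      push_cast
      ring
    obtain ⟨hu0, hu1⟩ := gagliardo N₀ N₁ hCald' u (γ * ‖x₁‖₊) huK
    -- dual functional on X
    obtain ⟨gₓ, hgnorm, hgx⟩ := exists_dual_vector ℝ x₁ (norm_ne_zero_iff.mpr hx₁)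
    set lam : X →ₗ[ℝ] ℝ := ‖x₁‖⁻¹ • (gₓ : X →ₗ[ℝ] ℝ) with hlamdef
    have hx₁norm : (0:ℝ) < ‖x₁‖ := norm_pos_iff.mpr hx₁
    have hlam1 : lam x₁ = 1 := by
      simp only [hlamdef, LinearMap.smul_apply, ContinuousLinearMap.coe_coe, smul_eq_mul]
      rw [hgx]
      exact inv_mul_cancel₀ hx₁norm.ne'
    have hlamb : ∀ x : X, (‖lam x‖₊ : ℝ≥0∞) ≤ (‖x₁‖₊⁻¹ : ℝ≥0) * (‖x‖₊:ℝ≥0∞) := by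
      intro x
      have h1 : ‖lam x‖ ≤ ‖x₁‖⁻¹ * ‖x‖ := by
        simp only [hlamdef, LinearMap.smul_apply, ContinuousLinearMap.coe_coe, smul_eq_mul]
        rw [norm_mul, norm_inv, norm_norm]
        gcongr
        calc ‖gₓ x‖ ≤ ‖gₓ‖ * ‖x‖ := gₓ.le_opNorm x
          _ = ‖x‖ := by rw [hgnorm, one_mul]
      have h2 : ‖lam x‖₊ ≤ ‖x₁‖₊⁻¹ * ‖x‖₊ := by
        rw [← NNReal.coe_le_coe]
        push_cast
        exact h1
      exact_mod_cast h2
    -- the operator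
    set S : (X × V) →ₗ[ℝ] X × V := LinearMap.prod
      ((LinearMap.toSpanSingleton ℝ X x₀).comp (lam.comp (LinearMap.fst ℝ X V)))
      (((LinearMap.toSpanSingleton ℝ V u).comp (lam.comp (LinearMap.fst ℝ X V)))
        + (T.comp (((γ:ℝ≥0):ℝ) • (LinearMap.snd ℝ X V)))) with hSdef
    have hSapp : ∀ z : X × V,
        S z = (lam z.1 • x₀, lam z.1 • u + T (((γ:ℝ≥0):ℝ) • z.2)) := by
      intro z
      simp [hSdef, LinearMap.toSpanSingleton_apply]
    set n₀ : ℝ≥0 := (N₀.N u).toNNReal with hn₀def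
    set n₁ : ℝ≥0 := (N₁.N u).toNNReal with hn₁def
    have hn₀ : N₀.N u = (n₀:ℝ≥0∞) := (ENNReal.coe_toNNReal hu0).symm
    have hn₁ : N₁.N u = (n₁:ℝ≥0∞) := (ENNReal.coe_toNNReal hu1).symm
    set C' : ℝ≥0 := ‖x₁‖₊⁻¹ * (‖x₀‖₊ + n₀ + n₁) + C * γ + 1 with hC'def
    have hb2 : C * γ ≤ C' := by
      rw [hC'def]
      exact le_add_right le_add_self
    refine ⟨S, ?_, C', ?_⟩
    · rw [hSapp (x₁, y₁)]
      simp only [hlam1, one_smul]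
      rw [hT, ← hy₀uv]
    · intro z
      have key : ∀ (M : CoupleNorm V) (nM : ℝ≥0), M.N u = (nM:ℝ≥0∞) →
          nM ≤ n₀ + n₁ → (∀ w, M.N (T w) ≤ (C:ℝ≥0∞) * M.N w) →
          prodN X M.N (S z) ≤ (C':ℝ≥0∞) * prodN X M.N z := by
        intro M nM hMu hnM hTM
        have hb1 : ‖x₁‖₊⁻¹ * (‖x₀‖₊ + nM) ≤ C' := by
          calc ‖x₁‖₊⁻¹ * (‖x₀‖₊ + nM) ≤ ‖x₁‖₊⁻¹ * (‖x₀‖₊ + (n₀ + n₁)) := by gcongr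
            _ = ‖x₁‖₊⁻¹ * (‖x₀‖₊ + n₀ + n₁) := by ring
            _ ≤ C' := by
                rw [hC'def]
                exact le_add_right (le_add_right le_rfl)
        have hstep : M.N (lam z.1 • u + T (((γ:ℝ≥0):ℝ) • z.2))
            ≤ (‖lam z.1‖₊ : ℝ≥0∞) * (nM:ℝ≥0∞) + (C:ℝ≥0∞) * ((γ:ℝ≥0∞) * M.N z.2) := by
          refine (M.add_le _ _).trans (add_le_add ?_ ?_)
          · rw [M.smul, hMu]
          · refine (hTM _).trans (le_of_eq ?_)
            rw [M.smul, hγnn]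
        calc prodN X M.N (S z)
            = (‖lam z.1 • x₀‖₊ : ℝ≥0∞) + M.N (lam z.1 • u + T (((γ:ℝ≥0):ℝ) • z.2)) := by
              rw [hSapp z]; rfl
          _ ≤ (‖lam z.1‖₊ : ℝ≥0∞) * (‖x₀‖₊:ℝ≥0∞)
              + ((‖lam z.1‖₊ : ℝ≥0∞) * (nM:ℝ≥0∞) + (C:ℝ≥0∞) * ((γ:ℝ≥0∞) * M.N z.2)) := by
              refine add_le_add (le_of_eq ?_) hstep
              rw [nnnorm_smul, ENNReal.coe_mul]
          _ = (‖lam z.1‖₊ : ℝ≥0∞) * ((‖x₀‖₊:ℝ≥0∞) + (nM:ℝ≥0∞))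
              + ((C * γ : ℝ≥0) : ℝ≥0∞) * M.N z.2 := by
              push_cast
              ring
          _ ≤ ((‖x₁‖₊⁻¹ : ℝ≥0) * (‖z.1‖₊:ℝ≥0∞)) * ((‖x₀‖₊:ℝ≥0∞) + (nM:ℝ≥0∞))
              + ((C * γ : ℝ≥0) : ℝ≥0∞) * M.N z.2 := by
              gcongr
              exact hlamb z.1
          _ = ((‖x₁‖₊⁻¹ * (‖x₀‖₊ + nM) : ℝ≥0) : ℝ≥0∞) * (‖z.1‖₊:ℝ≥0∞)
              + ((C * γ : ℝ≥0) : ℝ≥0∞) * M.N z.2 := by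
              push_cast
              ring
          _ ≤ (C':ℝ≥0∞) * (‖z.1‖₊:ℝ≥0∞) + (C':ℝ≥0∞) * M.N z.2 := by
              refine add_le_add ?_ ?_
              · exact mul_le_mul_left (by exact_mod_cast hb1) _
              · exact mul_le_mul_left (by exact_mod_cast hb2) _
          _ = (C':ℝ≥0∞) * prodN X M.N z := by
              rw [prodN, mul_add]
      exact ⟨key N₀ n₀ hn₀ le_self_add (fun w => (hTb w).1),
        key N₁ n₁ hn₁ le_add_self (fun w => (hTb w).2)⟩
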